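/- Let F be a field, S a nonempty finite subset of F, and p ∈ F[x₁,…,x_n] a multivariate polynomial of total degree at most d. If the number of points a ∈ S^n with p(a) = 0 is strictly greater than d·|S|^{n−1}, then p is identically zero. -/

import Mathlib

open MvPolynomial

private lemma sz_aux (F : Type*) [Field F] [DecidableEq F] :
    ∀ (n : ℕ) (p : MvPolynomial (Fin n) F), p ≠ 0 → ∀ S : Finset F,
      ((Fintype.piFinset fun _ : Fin n => S).filter
          fun a => MvPolynomial.eval a p = 0).card * S.card
        ≤ p.totalDegree * S.card ^ n := by
  intro n
  induction n with
  | zero =>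
      intro p hp S
      obtain ⟨c, rfl⟩ := MvPolynomial.C_surjective (Fin 0) p
      have hc : c ≠ 0 := fun h => hp (by simp [h])
      have : ((Fintype.piFinset fun _ : Fin 0 => S).filter
          fun a => MvPolynomial.eval a (C c) = 0) = ∅ := by
        apply Finset.filter_false_of_mem
        intro a _
        simpa using hc
      simp [this, hc]
  | succ n ih =>
      intro p hp S
      set f := finSuccEquiv F n p with hf_def
      have hf : f ≠ 0 := by
        intro h
        exact hp ((finSuccEquiv F n).injective (by rw [← hf_def, h, map_zero]))
      set k := f.natDegree with hk_def
      set q := f.leadingCoeff with hq_def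
      have hq : q ≠ 0 := Polynomial.leadingCoeff_ne_zero.mpr hf
      have hdq : q.totalDegree + k ≤ p.totalDegree := by
        have := totalDegree_coeff_finSuccEquiv_add_le p k
          (by rw [Polynomial.coeff_natDegree]; exact hq)
        rwa [Polynomial.coeff_natDegree] at this
      set Q := (Fintype.piFinset fun _ : Fin n => S).filter
          (fun a => MvPolynomial.eval a q = 0) with hQ_def
      set R := (Fintype.piFinset fun _ : Fin (n+1) => S).filter
          (fun a => MvPolynomial.eval a p = 0) with hR_def
      set R1 := R.filter (fun x => MvPolynomial.eval (Fin.tail x) q = 0) with hR1_def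
      set R2 := R.filter (fun x => ¬ MvPolynomial.eval (Fin.tail x) q = 0) with hR2_def
      have hsplit : R1.card + R2.card = R.card :=
        Finset.card_filter_add_card_filter_not _
      -- bound R1
      have h1 : R1.card ≤ S.card * Q.card := by
        have : R1.card ≤ (S ×ˢ Q).card := by
          apply Finset.card_le_card_of_injOn (fun x => (x 0, Fin.tail x))
          · intro x hx
            rw [Finset.mem_coe, hR1_def, Finset.mem_filter, hR_def, Finset.mem_filter] at hx
            obtain ⟨⟨hxS, hxp⟩, hxq⟩ := hx
            rw [Fintype.mem_piFinset] at hxS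
            refine Finset.mem_coe.mpr (Finset.mem_product.mpr ⟨hxS 0, ?_⟩)
            rw [hQ_def, Finset.mem_filter]
            exact ⟨Fintype.mem_piFinset.mpr fun i => hxS i.succ, hxq⟩
          · intro x _ y _ hxy
            simp only [Prod.mk.injEq] at hxy
            have := Fin.cons_self_tail x
            rw [← Fin.cons_self_tail x, ← Fin.cons_self_tail y, hxy.1, hxy.2]
        simpa [Finset.card_product] using this
      -- bound R2
      have h2 : R2.card ≤ k * S.card ^ n := by
        have key : R2.card ≤ k * (R2.image Fin.tail).card := by
          apply Finset.card_le_mul_card_image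
          intro t ht
          obtain ⟨x₀, hx₀, hx₀t⟩ := Finset.mem_image.mp ht
          have hx₀R2 := hx₀
          rw [hR2_def, Finset.mem_filter] at hx₀R2
          have hqt : MvPolynomial.eval t q ≠ 0 := hx₀t ▸ hx₀R2.2
          -- the univariate polynomial obtained by evaluating coefficients at t
          set g := Polynomial.map (MvPolynomial.eval t) f with hg_def
          have hgk : g.coeff k ≠ 0 := by
            rw [hg_def, Polynomial.coeff_map, hk_def, Polynomial.coeff_natDegree]
            exact hqt
          have hg0 : g ≠ 0 := fun h => hgk (by simp [h])
          have : (R2.filter fun x => Fin.tail x = t).card ≤ g.roots.toFinset.card := by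
            apply Finset.card_le_card_of_injOn (fun x => x 0)
            · intro x hx
              rw [Finset.mem_coe, Finset.mem_filter] at hx
              obtain ⟨hxR2, hxt⟩ := hx
              rw [hR2_def, Finset.mem_filter, hR_def, Finset.mem_filter] at hxR2
              have hxp : MvPolynomial.eval x p = 0 := hxR2.1.2
              rw [← Fin.cons_self_tail x, hxt] at hxp
              rw [eval_eq_eval_mv_eval'] at hxp
              rw [Finset.mem_coe, Multiset.mem_toFinset, Polynomial.mem_roots hg0]
              exact hxp
            · intro x hx y hy hxy
              simp only [Finset.mem_coe, Finset.mem_filter] at hx hy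
              rw [← Fin.cons_self_tail x, ← Fin.cons_self_tail y, hx.2, hy.2,
                show x 0 = y 0 from hxy]
          have hroots_le : g.roots.toFinset.card ≤ k := by
            calc g.roots.toFinset.card ≤ Multiset.card g.roots := Multiset.toFinset_card_le _
              _ ≤ g.natDegree := Polynomial.card_roots' g
              _ ≤ k := Polynomial.natDegree_map_le

          exact le_trans this hroots_le
        have himg : (R2.image Fin.tail).card ≤ S.card ^ n := by
          have : R2.image Fin.tail ⊆ Fintype.piFinset fun _ : Fin n => S := by
            intro t ht
            obtain ⟨x, hx, hxt⟩ := Finset.mem_image.mp ht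
            rw [hR2_def, Finset.mem_filter, hR_def, Finset.mem_filter] at hx
            have := Fintype.mem_piFinset.mp hx.1.1
            rw [← hxt]
            exact Fintype.mem_piFinset.mpr fun i => this i.succ
          calc (R2.image Fin.tail).card ≤ (Fintype.piFinset fun _ : Fin n => S).card :=
                Finset.card_le_card this
            _ = S.card ^ n := by simp [Fintype.card_piFinset, Finset.prod_const]
        calc R2.card ≤ k * (R2.image Fin.tail).card := key
          _ ≤ k * S.card ^ n := Nat.mul_le_mul_left _ himg
      -- combine
      have hIH := ih q hq S
      calc R.card * S.card = (R1.card + R2.card) * S.card := by rw [hsplit]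
        _ ≤ (S.card * Q.card + k * S.card ^ n) * S.card := by
            apply Nat.mul_le_mul_right
            exact Nat.add_le_add h1 h2
        _ = S.card * (Q.card * S.card) + k * S.card ^ (n+1) := by ring
        _ ≤ S.card * (q.totalDegree * S.card ^ n) + k * S.card ^ (n+1) := by
            exact Nat.add_le_add_right (Nat.mul_le_mul_left _ hIH) _
        _ = (q.totalDegree + k) * S.card ^ (n+1) := by ring
        _ ≤ p.totalDegree * S.card ^ (n+1) := Nat.mul_le_mul_right _ hdq

/-- **Contrapositive of Schwartz–Zippel.** If `p ∈ F[x₁,…,x_n]` has total degree at most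
`d` and vanishes at strictly more than `d·|S|^{n−1}` points of `S^n` for a nonempty finite
set `S ⊆ F`, then `p` is identically zero. -/
theorem eq_zero_of_many_roots_schwartz_zippel
    (F : Type*) [Field F] [DecidableEq F] (n d : ℕ)
    (S : Finset F) (hS : S.Nonempty)
    (p : MvPolynomial (Fin n) F) (hdeg : p.totalDegree ≤ d)
    (hroots : ((Fintype.piFinset fun _ : Fin n => S).filter
        fun a => MvPolynomial.eval a p = 0).card > d * S.card ^ (n - 1)) :
    p = 0 := by
  by_contra hp
  have hsz := sz_aux F n p hp S
  have hScard : 0 < S.card := Finset.card_pos.mpr hS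
  set c := ((Fintype.piFinset fun _ : Fin n => S).filter
      fun a => MvPolynomial.eval a p = 0).card
  have h1 : c * S.card ≤ d * S.card ^ n :=
    le_trans hsz (Nat.mul_le_mul_right _ hdeg)
  cases n with
  | zero =>
      simp only [Nat.zero_sub, pow_zero, mul_one] at hroots
      have : c ≤ c * S.card := Nat.le_mul_of_pos_right _ hScard
      simp only [pow_zero, mul_one] at h1
      omega
  | succ m =>
      have : d * S.card ^ m * S.card < c * S.card :=
        (Nat.mul_lt_mul_right hScard).mpr hroots
      rw [mul_assoc, ← pow_succ] at this
      omega
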